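/- Let (Ω, F, P) be a probability space with a filtration F₀ ⊆ F₁ ⊆ … ⊆ F_r, let p ∈ [0,1], and let X₁, …, X_r be {0,1}-valued random variables such that each X_i is F_i-measurable and E[X_i | F_{i−1}] ≤ p almost surely. Then for every v ∈ ℝ, P[X₁ + … + X_r ≥ v] ≤ P[B ≥ v], where B is a Binomial(r, p) random variable. -/

import Mathlib

open MeasureTheory Real
open scoped ENNReal

/-- Upper tail Pr[Binomial(r,p) ≥ v] of the binomial distribution with r trials and
success probability p. -/
noncomputable def binomialTail (r : ℕ) (p : ℝ) (v : ℝ) : ℝ :=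
  ∑ k ∈ Finset.range (r + 1),
    if v ≤ (k : ℝ) then (r.choose k : ℝ) * p ^ k * (1 - p) ^ (r - k) else 0

lemma binomialTail_nonneg (r : ℕ) {p : ℝ} (hp0 : 0 ≤ p) (hp1 : p ≤ 1) (v : ℝ) :
    0 ≤ binomialTail r p v := by
  have hq : 0 ≤ 1 - p := by linarith
  refine Finset.sum_nonneg fun k _ => ?_
  split
  · positivity
  · exact le_rfl

lemma binomialTail_rec (r : ℕ) (p v : ℝ) :
    binomialTail (r + 1) p v = p * binomialTail r p (v - 1) + (1 - p) * binomialTail r p v := by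
  unfold binomialTail
  rw [Finset.sum_range_succ'
    (fun k => if v ≤ (k : ℝ) then (((r+1).choose k : ℝ)) * p ^ k * (1 - p) ^ (r + 1 - k) else 0)
    (r + 1)]
  have key : ∀ k ∈ Finset.range (r + 1),
      (if v ≤ ((k+1 : ℕ) : ℝ) then (((r+1).choose (k+1) : ℝ)) * p ^ (k+1) * (1 - p) ^ (r + 1 - (k+1)) else 0)
      = p * (if v - 1 ≤ (k : ℝ) then (r.choose k : ℝ) * p ^ k * (1 - p) ^ (r - k) else 0)
        + (if v ≤ ((k+1 : ℕ) : ℝ) then (r.choose (k+1) : ℝ) * p ^ (k+1) * (1 - p) ^ (r - (k+1)) * (1-p)^(min 1 (r - k)) else 0) := by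
    intro k hk
    have h1 : r + 1 - (k + 1) = r - k := by omega
    have h2 : (v ≤ ((k+1:ℕ):ℝ)) ↔ (v - 1 ≤ (k:ℝ)) := by push_cast; constructor <;> intro <;> linarith
    rw [h1, Nat.choose_succ_succ]
    by_cases hv : v - 1 ≤ (k : ℝ)
    · rw [if_pos (h2.mpr hv), if_pos hv, if_pos (h2.mpr hv)]
      rcases Nat.lt_or_ge k r with hkr | hkr
      · have : min 1 (r - k) = 1 := by omega
        rw [this]
        have h3 : r - k = (r - (k+1)) + 1 := by omega
        rw [h3]
        push_cast
        ring
      · have hkeq : k = r := by simp [Finset.mem_range] at hk; omega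
        subst hkeq
        simp [Nat.choose_succ_self]
        ring
    · rw [if_neg (fun h => hv (h2.mp h)), if_neg hv, if_neg (fun h => hv (h2.mp h))]
      ring
  rw [Finset.sum_congr rfl key, Finset.sum_add_distrib]
  have hshift : ∀ k ∈ Finset.range (r + 1),
      (if v ≤ ((k+1 : ℕ) : ℝ) then (r.choose (k+1) : ℝ) * p ^ (k+1) * (1 - p) ^ (r - (k+1)) * (1-p)^(min 1 (r - k)) else 0)
      = (1 - p) * (if v ≤ ((k+1 : ℕ) : ℝ) then (r.choose (k+1) : ℝ) * p ^ (k+1) * (1 - p) ^ (r - (k+1)) else 0) := by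
    intro k hk
    rcases Nat.lt_or_ge k r with hkr | hkr
    · have : min 1 (r - k) = 1 := by omega
      rw [this]; split <;> ring
    · have hkeq : k = r := by simp [Finset.mem_range] at hk; omega
      subst hkeq
      simp [Nat.choose_succ_self]
  rw [Finset.sum_congr rfl hshift]
  have f0 : (if v ≤ ((0:ℕ) : ℝ) then (((r+1).choose 0 : ℝ)) * p ^ 0 * (1 - p) ^ (r + 1 - 0) else 0)
      = (1 - p) * (if v ≤ ((0:ℕ) : ℝ) then ((r.choose 0 : ℝ)) * p ^ 0 * (1 - p) ^ (r - 0) else 0) := by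
    split <;> simp <;> ring
  rw [f0, add_assoc]
  congr 1
  · rw [Finset.mul_sum]
  · rw [← Finset.mul_sum, ← mul_add, ← Finset.sum_range_succ'
      (fun k => if v ≤ (k : ℝ) then (r.choose k : ℝ) * p ^ k * (1 - p) ^ (r - k) else 0) (r + 1),
      Finset.sum_range_succ]
    simp [Nat.choose_succ_self]

/-- If {0,1}-valued random variables X₁,…,X_r are adapted to a filtration
(X i is F(i+1)-measurable, zero-indexed) with conditional success probability
E[X_i | F_{i-1}] ≤ p a.s., then their sum is stochastically dominated by Binomial(r,p):
P[X₁+…+X_r ≥ v] ≤ P[Binomial(r,p) ≥ v]. -/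
theorem sum_dominated_by_binomial
    {Ω : Type*} {m0 : MeasurableSpace Ω} (μ : Measure Ω) [IsProbabilityMeasure μ]
    (r : ℕ) (p : ℝ) (hp0 : 0 ≤ p) (hp1 : p ≤ 1)
    (F : Filtration ℕ m0)
    (X : ℕ → Ω → ℝ)
    (hval : ∀ i ∈ Finset.range r, ∀ ω, X i ω = 0 ∨ X i ω = 1)
    (hadapted : ∀ i ∈ Finset.range r, StronglyMeasurable[F (i + 1)] (X i))
    (hcond : ∀ i ∈ Finset.range r, ∀ᵐ ω ∂μ, (μ[X i | F i]) ω ≤ p)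
    (v : ℝ) :
    μ {ω | v ≤ ∑ i ∈ Finset.range r, X i ω} ≤ ENNReal.ofReal (binomialTail r p v) := by
  induction r generalizing v with
  | zero =>
    simp only [Finset.sum_range_zero]
    by_cases hv : v ≤ 0
    · have h1 : binomialTail 0 p v = 1 := by simp [binomialTail, hv]
      rw [h1]
      simpa using prob_le_one (μ := μ)
    · have h0 : {ω : Ω | v ≤ (0:ℝ)} = ∅ := by
        ext ω; simp [hv]
      rw [h0]; simp
  | succ r ih =>
    have hval' : ∀ i ∈ Finset.range r, ∀ ω, X i ω = 0 ∨ X i ω = 1 :=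
      fun i hi => hval i (Finset.mem_range.mpr (Nat.lt_succ_of_lt (Finset.mem_range.mp hi)))
    have hadapted' : ∀ i ∈ Finset.range r, StronglyMeasurable[F (i + 1)] (X i) :=
      fun i hi => hadapted i (Finset.mem_range.mpr (Nat.lt_succ_of_lt (Finset.mem_range.mp hi)))
    have hcond' : ∀ i ∈ Finset.range r, ∀ᵐ ω ∂μ, (μ[X i | F i]) ω ≤ p :=
      fun i hi => hcond i (Finset.mem_range.mpr (Nat.lt_succ_of_lt (Finset.mem_range.mp hi)))
    set S : Ω → ℝ := fun ω => ∑ i ∈ Finset.range r, X i ω with hS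
    have hrmem : r ∈ Finset.range (r + 1) := Finset.self_mem_range_succ r
    have hSmeas : StronglyMeasurable[F r] S := by
      refine Finset.stronglyMeasurable_fun_sum _ fun i hi => ?_
      exact (hadapted' i hi).mono (F.mono (Finset.mem_range.mp hi))
    have hXr : StronglyMeasurable[F (r+1)] (X r) := hadapted r hrmem
    have hXrm0 : StronglyMeasurable[m0] (X r) := hXr.mono (F.le (r+1))
    set B : Set Ω := {ω | v ≤ S ω} with hBdef
    set C : Set Ω := {ω | v - 1 ≤ S ω} with hCdef
    have hB : MeasurableSet[F r] B := measurableSet_le measurable_const hSmeas.measurable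
    have hC : MeasurableSet[F r] C := measurableSet_le measurable_const hSmeas.measurable
    have hA' : MeasurableSet[F r] (C \ B) := hC.diff hB
    have hBsubC : B ⊆ C := fun ω h => by
      simp only [hBdef, hCdef, Set.mem_setOf_eq] at *; linarith
    set D : Set Ω := {ω | X r ω = 1} with hDdef
    have hD : MeasurableSet D := hXrm0.measurable (measurableSet_singleton 1)
    have hXint : Integrable (X r) μ := by
      refine ⟨hXrm0.aestronglyMeasurable, HasFiniteIntegral.of_bounded (C := 1) ?_⟩
      filter_upwards with ω
      rcases hval r hrmem ω with h | h <;> simp [h]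
    -- inclusion
    have hincl : {ω | v ≤ ∑ i ∈ Finset.range (r+1), X i ω} ⊆ B ∪ ((C \ B) ∩ D) := by
      intro ω hω
      simp only [Set.mem_setOf_eq, Finset.sum_range_succ] at hω
      rcases hval r hrmem ω with h | h
      · left; simp only [hBdef, Set.mem_setOf_eq]; rw [h] at hω; linarith
      · by_cases hb : ω ∈ B
        · exact Or.inl hb
        · right
          refine ⟨⟨?_, hb⟩, h⟩
          simp only [hCdef, Set.mem_setOf_eq]; rw [h] at hω; linarith
    -- key bound on μ ((C \ B) ∩ D)
    have hkey : μ ((C \ B) ∩ D) ≤ ENNReal.ofReal p * μ (C \ B) := by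
      have hA'm0 : MeasurableSet (C \ B) := F.le r _ hA'
      have heq1 : ∫ ω in C \ B, X r ω ∂μ = (μ ((C \ B) ∩ D)).toReal := by
        have hpt : ∀ ω, X r ω = D.indicator (fun _ => (1:ℝ)) ω := by
          intro ω
          rcases hval r hrmem ω with h | h
          · rw [h, Set.indicator_apply, if_neg]; simp [hDdef, h]
          · rw [h, Set.indicator_apply, if_pos]; simp [hDdef, h]
        calc ∫ ω in C \ B, X r ω ∂μ
            = ∫ ω in C \ B, D.indicator (fun _ => (1:ℝ)) ω ∂μ := by
              exact setIntegral_congr_fun hA'm0 (fun ω _ => hpt ω)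
          _ = ∫ ω in (C \ B) ∩ D, (1:ℝ) ∂μ := setIntegral_indicator hD
          _ = (μ ((C \ B) ∩ D)).toReal := by rw [setIntegral_const]; simp [Measure.real]
      have heq2 : ∫ ω in C \ B, X r ω ∂μ = ∫ ω in C \ B, (μ[X r | F r]) ω ∂μ :=
        (setIntegral_condExp (F.le r) hXint hA').symm
      have h3 : ∫ ω in C \ B, (μ[X r | F r]) ω ∂μ ≤ ∫ ω in C \ B, p ∂μ := by
        refine integral_mono_ae integrable_condExp.restrict (integrable_const p) ?_
        exact ae_restrict_of_ae (hcond r hrmem)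
      have h4 : ∫ ω in C \ B, (p:ℝ) ∂μ = (μ (C \ B)).toReal * p := by
        rw [setIntegral_const]; simp [smul_eq_mul, Measure.real]
      have h5 : (μ ((C \ B) ∩ D)).toReal ≤ p * (μ (C \ B)).toReal := by
        rw [← heq1, heq2]; rw [mul_comm]; exact h3.trans_eq h4
      calc μ ((C \ B) ∩ D) = ENNReal.ofReal (μ ((C \ B) ∩ D)).toReal :=
            (ENNReal.ofReal_toReal (measure_ne_top μ _)).symm
        _ ≤ ENNReal.ofReal (p * (μ (C \ B)).toReal) := ENNReal.ofReal_le_ofReal h5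
        _ = ENNReal.ofReal p * ENNReal.ofReal (μ (C \ B)).toReal := ENNReal.ofReal_mul hp0
        _ = ENNReal.ofReal p * μ (C \ B) := by rw [ENNReal.ofReal_toReal (measure_ne_top μ _)]
    -- assemble
    have hBm0 : MeasurableSet B := F.le r _ hB
    have hA'm0 : MeasurableSet (C \ B) := F.le r _ hA'
    have hsplit : (1 : ℝ≥0∞) = ENNReal.ofReal (1 - p) + ENNReal.ofReal p := by
      rw [← ENNReal.ofReal_add (by linarith) hp0]; simp
    have hunion : μ B + μ (C \ B) = μ C := by
      rw [← measure_union (Set.disjoint_sdiff_right) hA'm0, Set.union_diff_cancel hBsubC]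
    calc μ {ω | v ≤ ∑ i ∈ Finset.range (r+1), X i ω}
        ≤ μ (B ∪ ((C \ B) ∩ D)) := measure_mono hincl
      _ ≤ μ B + μ ((C \ B) ∩ D) := measure_union_le _ _
      _ ≤ μ B + ENNReal.ofReal p * μ (C \ B) := add_le_add_right hkey _
      _ = ENNReal.ofReal (1 - p) * μ B + ENNReal.ofReal p * (μ B + μ (C \ B)) := by
          rw [mul_add]
          conv_lhs => rw [show μ B = 1 * μ B from (one_mul _).symm, hsplit, add_mul]
          ring
      _ = ENNReal.ofReal (1 - p) * μ B + ENNReal.ofReal p * μ C := by rw [hunion]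
      _ ≤ ENNReal.ofReal (1 - p) * ENNReal.ofReal (binomialTail r p v)
          + ENNReal.ofReal p * ENNReal.ofReal (binomialTail r p (v - 1)) := by
          gcongr
          · exact ih hval' hadapted' hcond' v
          · exact ih hval' hadapted' hcond' (v - 1)
      _ = ENNReal.ofReal (binomialTail (r+1) p v) := by
          have hT1 := binomialTail_nonneg r hp0 hp1 v
          have hT2 := binomialTail_nonneg r hp0 hp1 (v - 1)
          rw [← ENNReal.ofReal_mul (by linarith), ← ENNReal.ofReal_mul hp0,
            ← ENNReal.ofReal_add (mul_nonneg (by linarith) hT1) (mul_nonneg hp0 hT2),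
            binomialTail_rec, add_comm]
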